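/- Let ε > 0, let ΔB be a positive integer, let 0 < δ < 1, let a = ε/ΔB, let p = (e^a − 1)/(e^a + 1), and let η₀ = −(ΔB/ε)·ln((e^a + 1)·(1 − (1−δ)^{1/ΔB})). Assume η₀ ≥ 0. Then: (i) the negative tail of the discrete Laplace distribution satisfies ∑_{x∈ℤ, x<0} p·e^{−a·|x−η₀|} = e^{−a·η₀}/(e^a + 1); (ii) this quantity equals 1 − (1−δ)^{1/ΔB}; and (iii) consequently (1 − Pr[η < 0])^{ΔB} = 1 − δ, i.e., the probability that all ΔB independent noise draws are nonnegative is exactly 1 − δ. -/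

import Mathlib

/-- Equivalence between ℕ and negative integers, `n ↦ -(n+1)`. -/
def negIntEquiv : ℕ ≃ {x : ℤ // x < 0} where
  toFun n := ⟨-((n : ℤ) + 1), by omega⟩
  invFun x := (-(x : ℤ) - 1).toNat
  left_inv n := by simp
  right_inv x := by
    rcases x with ⟨x, hx⟩
    ext
    simp only
    omega

/-- Negative-tail computation from the proof of Lemma B.1: with the shift η₀ of
Definition 4.3, the negative tail of the discrete Laplace distribution equals
`1 − (1−δ)^{1/ΔB}`, so all ΔB independent draws are nonnegative with probability
exactly 1 − δ. -/
theorem laplace_negative_tail (ε : ℝ) (hε : 0 < ε) (ΔB : ℕ) (hΔB : 0 < ΔB)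
    (δ a p η₀ : ℝ) (hδ0 : 0 < δ) (hδ1 : δ < 1)
    (ha : a = ε / (ΔB : ℝ))
    (hp : p = (Real.exp a - 1) / (Real.exp a + 1))
    (hη : η₀ = -((ΔB : ℝ) / ε) *
      Real.log ((Real.exp a + 1) * (1 - (1 - δ) ^ ((1 : ℝ) / (ΔB : ℝ)))))
    (hη0 : 0 ≤ η₀) :
    Summable (fun x : {x : ℤ // x < 0} =>
      p * Real.exp (-a * |((x : ℤ) : ℝ) - η₀|)) ∧
    (∑' x : {x : ℤ // x < 0}, p * Real.exp (-a * |((x : ℤ) : ℝ) - η₀|)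
      = Real.exp (-a * η₀) / (Real.exp a + 1)) ∧
    (Real.exp (-a * η₀) / (Real.exp a + 1) = 1 - (1 - δ) ^ ((1 : ℝ) / (ΔB : ℝ))) ∧
    ((1 - Real.exp (-a * η₀) / (Real.exp a + 1)) ^ ΔB = 1 - δ) := by
  have hΔ : (0:ℝ) < (ΔB:ℝ) := by exact_mod_cast hΔB
  have ha0 : 0 < a := by rw [ha]; positivity
  have hE1 : 1 < Real.exp a := by
    rw [← Real.exp_zero]; exact Real.exp_lt_exp.mpr ha0
  have hEpos : (0:ℝ) < Real.exp a + 1 := by linarith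
  set t : ℝ := (1 - δ) ^ ((1:ℝ)/(ΔB:ℝ)) with ht
  have h1δ : 0 < 1 - δ := by linarith
  have ht0 : 0 < t := Real.rpow_pos_of_pos h1δ _
  have ht1 : t < 1 := by
    rw [ht]
    exact Real.rpow_lt_one (le_of_lt h1δ) (by linarith) (by positivity)
  have hprod : 0 < (Real.exp a + 1) * (1 - t) := by
    have : 0 < 1 - t := by linarith
    positivity
  -- the key value of exp(-a*η₀)
  have hE : Real.exp (-a * η₀) = (Real.exp a + 1) * (1 - t) := by
    have harg : -a * η₀ = Real.log ((Real.exp a + 1) * (1 - t)) := by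
      rw [hη, ha]
      field_simp
    rw [harg, Real.exp_log hprod]
  -- part (ii)
  have hii : Real.exp (-a * η₀) / (Real.exp a + 1) = 1 - t := by
    rw [hE]; field_simp
  -- part (iii)
  have hiii : (1 - Real.exp (-a * η₀) / (Real.exp a + 1)) ^ ΔB = 1 - δ := by
    rw [hii]
    have : (1 : ℝ) - (1 - t) = t := by ring
    rw [this, ht, ← Real.rpow_natCast ((1-δ) ^ ((1:ℝ)/(ΔB:ℝ))) ΔB,
      ← Real.rpow_mul (le_of_lt h1δ)]
    rw [one_div, inv_mul_cancel₀ (ne_of_gt hΔ), Real.rpow_one]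
  -- the term as a geometric series, via the equivalence
  set r : ℝ := Real.exp (-a) with hr
  have hr0 : 0 ≤ r := (Real.exp_pos _).le
  have hr1 : r < 1 := by
    rw [hr, ← Real.exp_zero]
    exact Real.exp_lt_exp.mpr (by linarith)
  have hterm : ∀ n : ℕ,
      p * Real.exp (-a * |(((negIntEquiv n : ℤ)) : ℝ) - η₀|)
        = (p * Real.exp (-a * η₀) * r) * r ^ n := by
    intro n
    have h1 : (((negIntEquiv n : ℤ)) : ℝ) = -((n:ℝ) + 1) := by
      simp [negIntEquiv]
    have h2 : |(-((n:ℝ) + 1)) - η₀| = η₀ + ((n:ℝ) + 1) := by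
      rw [abs_of_nonpos (by linarith [Nat.cast_nonneg (α := ℝ) n])]
      ring
    rw [h1, h2]
    have h3 : -a * (η₀ + ((n:ℝ) + 1)) = -a * η₀ + -a + (n:ℝ) * (-a) := by ring
    rw [h3, Real.exp_add, Real.exp_add, Real.exp_nat_mul]
    rw [hr]; ring
  have hgeo : Summable fun n : ℕ => (p * Real.exp (-a * η₀) * r) * r ^ n :=
    (summable_geometric_of_lt_one hr0 hr1).mul_left _
  have hsum : Summable (fun x : {x : ℤ // x < 0} =>
      p * Real.exp (-a * |((x : ℤ) : ℝ) - η₀|)) := by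
    rw [← negIntEquiv.summable_iff]
    exact hgeo.congr fun n => (hterm n).symm
  refine ⟨hsum, ?_, hii, hiii⟩
  rw [← negIntEquiv.tsum_eq]
  calc (∑' n : ℕ, p * Real.exp (-a * |(((negIntEquiv n : ℤ)) : ℝ) - η₀|))
      = ∑' n : ℕ, (p * Real.exp (-a * η₀) * r) * r ^ n := by
        exact tsum_congr hterm
    _ = (p * Real.exp (-a * η₀) * r) * (1 - r)⁻¹ := by
        rw [tsum_mul_left, tsum_geometric_of_lt_one hr0 hr1]
    _ = Real.exp (-a * η₀) / (Real.exp a + 1) := by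
        rw [hp, hr, Real.exp_neg]
        have hE0 : Real.exp a ≠ 0 := (Real.exp_pos a).ne'
        have hEm : Real.exp a - 1 ≠ 0 := ne_of_gt (by linarith)
        have h1r : 1 - (Real.exp a)⁻¹ = (Real.exp a - 1) / Real.exp a := by
          field_simp
        rw [h1r]
        field_simp
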